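/- For a trace class operator A on a separable Hilbert space and every k ≥ 0, the trace norm of the k-th exterior power satisfies ‖Λ^k(A)‖₁ ≤ ‖A‖₁^k / k!. -/

import Mathlib

noncomputable section

variable {H : Type*} [NormedAddCommGroup H] [InnerProductSpace ℂ H] [CompleteSpace H]

/-- The set of values `‖∑ ⟪T eᵢ, fᵢ⟫‖` over finite orthonormal families `e, f`;
its supremum is the trace norm `‖T‖₁`. -/
def traceNormSet (T : H →L[ℂ] H) : Set ℝ :=
  {s | ∃ (n : ℕ) (e f : Fin n → H), Orthonormal ℂ e ∧ Orthonormal ℂ f ∧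
    s = ‖∑ i, (inner ℂ (T (e i)) (f i) : ℂ)‖}

/-- `T` is trace class iff the trace-norm defining set is bounded above. -/
def IsTraceClass (T : H →L[ℂ] H) : Prop := BddAbove (traceNormSet T)

/-- The trace norm `‖T‖₁`. -/
def traceNorm (T : H →L[ℂ] H) : ℝ := sSup (traceNormSet T)

/-- The trace-norm defining set for the `k`-th exterior power `Λᵏ(A)` of `A`.
A family of decomposable wedges `eᵢ = eᵢ₁ ∧ ⋯ ∧ eᵢₖ` is orthonormal in `Λᵏ(H)` iff
the Gram determinants `det(⟪eᵢₐ, eⱼᵦ⟫)` equal `δᵢⱼ`, and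
`⟪Λᵏ(A) eᵢ, fᵢ⟫ = det(⟪A eᵢₐ, fᵢᵦ⟫)`.  Since the singular vectors of `Λᵏ(A)` are
decomposable, the supremum of this set is the trace norm `‖Λᵏ(A)‖₁`. -/
def extPowerTraceNormSet (k : ℕ) (A : H →L[ℂ] H) : Set ℝ :=
  {s | ∃ (n : ℕ) (e f : Fin n → Fin k → H),
    (∀ i j, Matrix.det (Matrix.of fun a b : Fin k => (inner ℂ (e i a) (e j b) : ℂ)) =
      if i = j then 1 else 0) ∧
    (∀ i j, Matrix.det (Matrix.of fun a b : Fin k => (inner ℂ (f i a) (f j b) : ℂ)) =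
      if i = j then 1 else 0) ∧
    s = ‖∑ i, Matrix.det (Matrix.of fun a b : Fin k => (inner ℂ (A (e i a)) (f i b) : ℂ))‖}

/-- The trace norm of the `k`-th exterior power `Λᵏ(A)`. -/
def extPowerTraceNorm (k : ℕ) (A : H →L[ℂ] H) : ℝ := sSup (extPowerTraceNormSet k A)

open scoped ComplexConjugate

namespace ExtPowAux



variable {k N : ℕ}

lemma det_submatrix_comp (P : Matrix (Fin k) (Fin N) ℂ) (φ : Fin k → Fin N)
    (τ : Equiv.Perm (Fin k)) :
    (P.submatrix id (φ ∘ τ)).det = ((Equiv.Perm.sign τ : ℤ) : ℂ) * (P.submatrix id φ).det := by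
  have h : P.submatrix id (φ ∘ τ) = (P.submatrix id φ).submatrix id τ := rfl
  rw [h, Matrix.det_permute']

lemma det_sub_apply (P : Matrix (Fin k) (Fin N) ℂ) (φ : Fin k → Fin N) :
    (P.submatrix id φ).det
      = ∑ σ : Equiv.Perm (Fin k), ((Equiv.Perm.sign σ : ℤ) : ℂ) * ∏ i, P (σ i) (φ i) :=
  Matrix.det_apply' _

lemma det_sub_apply' (P : Matrix (Fin k) (Fin N) ℂ) (φ : Fin k → Fin N) :
    (P.submatrix id φ).det
      = ∑ σ : Equiv.Perm (Fin k), ((Equiv.Perm.sign σ : ℤ) : ℂ) * ∏ i, P i (φ (σ i)) := by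
  rw [← Matrix.det_transpose, Matrix.det_apply']
  rfl

lemma cauchyBinet (P Q : Matrix (Fin k) (Fin N) ℂ) (d : Fin N → ℂ) :
    (k.factorial : ℂ) * (P * Matrix.diagonal d * Q.transpose).det
      = ∑ φ : Fin k → Fin N,
          (∏ a, d (φ a)) * ((P.submatrix id φ).det * (Q.submatrix id φ).det) := by
  classical
  set R : Matrix (Fin k) (Fin N) ℂ := Matrix.of fun a j => Q a j * d j with hR
  have h1 : P * Matrix.diagonal d * Q.transpose = P * R.transpose := by
    rw [Matrix.mul_assoc]
    congr 1
    ext i j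
    simp [R, Matrix.mul_apply, Matrix.diagonal, mul_comm]
  have hB : (P * R.transpose).det
      = ∑ φ : Fin k → Fin N, (∏ a, R a (φ a)) * (P.submatrix id φ).det := by
    rw [Matrix.det_apply']
    have entry : ∀ (σ : Equiv.Perm (Fin k)),
        (∏ i, (P * R.transpose) (σ i) i) = ∑ φ : Fin k → Fin N,
          ∏ i, (P (σ i) (φ i) * R i (φ i)) := by
      intro σ
      calc (∏ i, (P * R.transpose) (σ i) i) = ∏ i, ∑ j, P (σ i) j * R i j := by
            refine Finset.prod_congr rfl fun i _ => ?_
            simp [Matrix.mul_apply, Matrix.transpose_apply]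
        _ = ∑ φ ∈ Fintype.piFinset (fun _ : Fin k => (Finset.univ : Finset (Fin N))),
              ∏ i, (P (σ i) (φ i) * R i (φ i)) := Finset.prod_univ_sum _ _
        _ = ∑ φ : Fin k → Fin N, ∏ i, (P (σ i) (φ i) * R i (φ i)) := by
            rw [Fintype.piFinset_univ]
    calc ∑ σ : Equiv.Perm (Fin k), ((Equiv.Perm.sign σ : ℤ) : ℂ)
            * ∏ i, (P * R.transpose) (σ i) i
        = ∑ σ : Equiv.Perm (Fin k), ∑ φ : Fin k → Fin N,
            ((Equiv.Perm.sign σ : ℤ) : ℂ) * ∏ i, (P (σ i) (φ i) * R i (φ i)) := by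
          refine Finset.sum_congr rfl fun σ _ => ?_
          rw [entry σ, Finset.mul_sum]
      _ = ∑ φ : Fin k → Fin N, ∑ σ : Equiv.Perm (Fin k),
            (∏ a, R a (φ a)) * (((Equiv.Perm.sign σ : ℤ) : ℂ) * ∏ i, P (σ i) (φ i)) := by
          rw [Finset.sum_comm]
          refine Finset.sum_congr rfl fun φ _ => Finset.sum_congr rfl fun σ _ => ?_
          rw [Finset.prod_mul_distrib]
          ring
      _ = ∑ φ : Fin k → Fin N, (∏ a, R a (φ a)) * (P.submatrix id φ).det := by
          refine Finset.sum_congr rfl fun φ _ => ?_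
          rw [← Finset.mul_sum, det_sub_apply]
  have hD : ∀ φ : Fin k → Fin N, (R.submatrix id φ).det
      = (∏ a, d (φ a)) * (Q.submatrix id φ).det := by
    intro φ
    have h2 : R.submatrix id φ
        = (Q.submatrix id φ) * Matrix.diagonal (fun b => d (φ b)) := by
      ext a b
      simp [R, Matrix.mul_apply, Matrix.diagonal]
    rw [h2, Matrix.det_mul, Matrix.det_diagonal, mul_comm]
  have hC : (k.factorial : ℂ) * ∑ φ : Fin k → Fin N, (∏ a, R a (φ a)) * (P.submatrix id φ).det
      = ∑ φ : Fin k → Fin N, (R.submatrix id φ).det * (P.submatrix id φ).det := by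
    have card : (((Finset.univ : Finset (Equiv.Perm (Fin k))).card : ℕ) : ℂ)
        = (k.factorial : ℂ) := by
      rw [Finset.card_univ, Fintype.card_perm, Fintype.card_fin]
    calc (k.factorial : ℂ) * ∑ φ : Fin k → Fin N, (∏ a, R a (φ a)) * (P.submatrix id φ).det
        = ∑ τ : Equiv.Perm (Fin k), ∑ φ : Fin k → Fin N,
            (∏ a, R a (φ a)) * (P.submatrix id φ).det := by
          rw [Finset.sum_const, nsmul_eq_mul, card]
      _ = ∑ τ : Equiv.Perm (Fin k), ∑ φ : Fin k → Fin N,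
            (∏ a, R a ((φ ∘ τ) a)) * (P.submatrix id (φ ∘ τ)).det := by
          refine Finset.sum_congr rfl fun τ _ => ?_
          exact (Equiv.sum_comp (Equiv.arrowCongr (τ⁻¹ : Equiv.Perm (Fin k)) (Equiv.refl (Fin N)))
            (fun φ => (∏ a, R a (φ a)) * (P.submatrix id φ).det)).symm
      _ = ∑ φ : Fin k → Fin N, (∑ τ : Equiv.Perm (Fin k),
            ((Equiv.Perm.sign τ : ℤ) : ℂ) * ∏ a, R a (φ (τ a))) * (P.submatrix id φ).det := by
          rw [Finset.sum_comm]
          refine Finset.sum_congr rfl fun φ _ => ?_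
          rw [Finset.sum_mul]
          refine Finset.sum_congr rfl fun τ _ => ?_
          rw [det_submatrix_comp]
          simp only [Function.comp_apply]
          ring
      _ = ∑ φ : Fin k → Fin N, (R.submatrix id φ).det * (P.submatrix id φ).det := by
          refine Finset.sum_congr rfl fun φ _ => ?_
          congr 1
          exact (det_sub_apply' R φ).symm
  rw [h1, hB, hC]
  refine Finset.sum_congr rfl fun φ _ => ?_
  rw [hD φ]
  ring




/-- Abstract Bessel-type bound. -/
lemma bessel_bound {n : ℕ} {ι : Type*} [Fintype ι] [DecidableEq ι] {c : ℝ}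
    (hc : 0 < c) (α : Fin n → ι → ℂ) (ξ : ι → ℂ) (φ0 : ι)
    (hα : ∀ i j, ∑ ψ, α i ψ * conj (α j ψ) = if i = j then (c : ℂ) else 0)
    (hξ : ∑ ψ, ξ ψ * conj (ξ ψ) = (c : ℂ))
    (hp : ∀ i, ∑ ψ, α i ψ * conj (ξ ψ) = (c : ℂ) * α i φ0) :
    ∑ i, ‖α i φ0‖ ^ 2 ≤ 1 := by
  classical
  set r : ℝ := Real.sqrt c with hr
  have hr0 : 0 < r := Real.sqrt_pos.mpr hc
  have hr2 : r * r = c := Real.mul_self_sqrt hc.le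
  have hrc : ((r : ℂ)) * (r : ℂ) = (c : ℂ) := by
    rw [← Complex.ofReal_mul, hr2]
  have hrne : (r : ℂ) ≠ 0 := Complex.ofReal_ne_zero.mpr hr0.ne'
  let W : Fin n → EuclideanSpace ℂ ι := fun i => WithLp.toLp 2 (fun ψ => conj (α i ψ))
  let y : EuclideanSpace ℂ ι := WithLp.toLp 2 (fun ψ => conj (ξ ψ))
  have hWW : ∀ i j, (inner ℂ (W i) (W j) : ℂ) = if i = j then (c : ℂ) else 0 := by
    intro i j
    rw [← hα i j]
    simp [W, PiLp.inner_apply, RCLike.inner_apply]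
    exact Finset.sum_congr rfl fun _ _ => mul_comm _ _
  have hWy : ∀ i, (inner ℂ (W i) y : ℂ) = (c : ℂ) * α i φ0 := by
    intro i
    rw [← hp i]
    simp [W, y, PiLp.inner_apply, RCLike.inner_apply]
    exact Finset.sum_congr rfl fun _ _ => mul_comm _ _
  have hyy : (inner ℂ y y : ℂ) = (c : ℂ) := by
    rw [← hξ, PiLp.inner_apply]
    refine Finset.sum_congr rfl fun ψ _ => ?_
    simp only [RCLike.inner_apply]
    simp [y, mul_comm]
  let V : Fin n → EuclideanSpace ℂ ι := fun i => ((r : ℂ))⁻¹ • W i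
  have hV : Orthonormal ℂ V := by
    rw [orthonormal_iff_ite]
    intro i j
    rw [show (inner ℂ (V i) (V j) : ℂ)
        = conj (((r : ℂ))⁻¹) * (((r : ℂ))⁻¹ * inner ℂ (W i) (W j)) by
      simp only [V, inner_smul_left, inner_smul_right, map_inv₀, Complex.conj_ofReal]]
    rw [hWW i j]
    by_cases h : i = j
    · simp only [h, if_true, map_inv₀, Complex.conj_ofReal]
      rw [show ((r:ℂ))⁻¹ * (((r:ℂ))⁻¹ * (c:ℂ)) = ((r:ℂ)*(r:ℂ))⁻¹ * c by ring, hrc]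
      exact inv_mul_cancel₀ (Complex.ofReal_ne_zero.mpr hc.ne')
    · simp [h]
  have hyn : ‖y‖ ^ 2 = c := by
    have h2 := inner_self_eq_norm_sq (𝕜 := ℂ) y
    rw [hyy] at h2
    simpa using h2.symm
  have hb := hV.sum_inner_products_le (x := y) (s := (Finset.univ : Finset (Fin n)))
  rw [hyn] at hb
  have hnorm : ∀ i, ‖(inner ℂ (V i) y : ℂ)‖ ^ 2 = c * ‖α i φ0‖ ^ 2 := by
    intro i
    have hiy : (inner ℂ (V i) y : ℂ) = ((r : ℂ))⁻¹ * ((c : ℂ) * α i φ0) := by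
      simp only [V, inner_smul_left, map_inv₀, Complex.conj_ofReal, hWy i]
    rw [hiy, norm_mul, norm_mul, mul_pow, mul_pow, norm_inv, Complex.norm_real,
      Complex.norm_real, Real.norm_of_nonneg hr0.le, Real.norm_of_nonneg hc.le]
    rw [show (r⁻¹) ^ 2 * (c ^ 2 * ‖α i φ0‖ ^ 2) = (r⁻¹ ^ 2 * c) * (c * ‖α i φ0‖ ^ 2) by ring,
      show r⁻¹ ^ 2 * c = 1 by rw [sq, ← hr2]; field_simp]
    ring
  have hfinal : ∑ i, c * ‖α i φ0‖ ^ 2 ≤ c := by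
    calc ∑ i, c * ‖α i φ0‖ ^ 2 = ∑ i : Fin n, ‖(inner ℂ (V i) y : ℂ)‖ ^ 2 :=
          Finset.sum_congr rfl fun i _ => (hnorm i).symm
      _ ≤ c := hb
  rw [← Finset.mul_sum] at hfinal
  exact (mul_le_iff_le_one_right hc).mp (by linarith)


lemma conj_det_submatrix (M : Matrix (Fin k) (Fin N) ℂ) (φ : Fin k → Fin N) :
    ((M.map (starRingEnd ℂ)).submatrix id φ).det = conj ((M.submatrix id φ).det) := by
  have h : (M.map (starRingEnd ℂ)).submatrix id φ = (M.submatrix id φ).map (starRingEnd ℂ) := rfl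
  rw [h, ← RingHom.mapMatrix_apply, ← RingHom.map_det]

lemma matrix_bound {n : ℕ} (P Q : Fin n → Matrix (Fin k) (Fin N) ℂ) (s : Fin N → ℝ)
    (hs : ∀ j, 0 ≤ s j)
    (hP : ∀ i j, (P i * (P j).conjTranspose).det = if i = j then 1 else 0)
    (hQ : ∀ i j, ((Q i).map (starRingEnd ℂ) * (Q j).transpose).det = if i = j then 1 else 0) :
    ‖∑ i, (P i * Matrix.diagonal (fun j => ((s j : ℝ) : ℂ)) * (Q i).transpose).det‖
      ≤ (∑ j, s j) ^ k / (k.factorial : ℝ) := by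
  classical
  have hkfac : (0 : ℝ) < (k.factorial : ℝ) := by positivity
  set c : ℝ := (k.factorial : ℝ) with hcdef
  have hcast : ((c : ℝ) : ℂ) = ((k.factorial : ℕ) : ℂ) := by push_cast [hcdef]; ring
  set d : Fin N → ℂ := fun j => ((s j : ℝ) : ℂ) with hd
  set α : Fin n → (Fin k → Fin N) → ℂ := fun i φ => ((P i).submatrix id φ).det with hαdef
  set β : Fin n → (Fin k → Fin N) → ℂ := fun i φ => ((Q i).submatrix id φ).det with hβdef
  have hα : ∀ i j, ∑ φ : Fin k → Fin N, α i φ * conj (α j φ)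
      = if i = j then ((c : ℝ) : ℂ) else 0 := by
    intro i j
    have hcb := cauchyBinet (P i) ((P j).map (starRingEnd ℂ)) (fun _ => 1)
    have h1 : P i * ((P j).map (starRingEnd ℂ)).transpose
        = P i * (P j).conjTranspose := by
      rfl
    rw [Matrix.diagonal_one, Matrix.mul_one, h1, hP i j] at hcb
    simp only [Finset.prod_const_one, one_mul, conj_det_submatrix] at hcb
    rw [← hcb, hcast]
    simp [mul_ite]
  have hβo : ∀ i j, ∑ φ : Fin k → Fin N, conj (β i φ) * β j φ
      = if i = j then ((c : ℝ) : ℂ) else 0 := by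
    intro i j
    have hcb := cauchyBinet ((Q i).map (starRingEnd ℂ)) (Q j) (fun _ => 1)
    rw [Matrix.diagonal_one, Matrix.mul_one, hQ i j] at hcb
    simp only [Finset.prod_const_one, one_mul, conj_det_submatrix] at hcb
    rw [← hcb, hcast]
    simp [mul_ite]
  have hvanish : ∀ (M : Matrix (Fin k) (Fin N) ℂ) (φ : Fin k → Fin N),
      ¬ Function.Injective φ → (M.submatrix id φ).det = 0 := by
    intro M φ hφ
    rw [Function.not_injective_iff] at hφ
    obtain ⟨a, b, hab, hne⟩ := hφ
    exact Matrix.det_zero_of_column_eq hne (fun r => by simp [Matrix.submatrix_apply, hab])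
  have hperφ : ∀ φ : Fin k → Fin N, ‖∑ i, α i φ * β i φ‖ ≤ 1 := by
    intro φ
    by_cases hφ : Function.Injective φ
    · set Z : Matrix (Fin k) (Fin N) ℂ :=
        Matrix.of (fun a j => if j = φ a then 1 else 0) with hZ
      set ξ : (Fin k → Fin N) → ℂ := fun ψ => (Z.submatrix id ψ).det with hξdef
      have hξreal : ∀ ψ, conj (ξ ψ) = ξ ψ := by
        intro ψ
        rw [hξdef, ← conj_det_submatrix]
        congr 1
        ext a b
        simp only [Matrix.map_apply, hZ, Matrix.of_apply, starRingEnd_apply, apply_ite]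
        simp
      have hZZ : Z * Z.transpose = 1 := by
        ext a b
        simp only [Matrix.mul_apply, Matrix.transpose_apply, hZ, Matrix.of_apply, ite_mul,
          one_mul, zero_mul, Finset.sum_ite_eq', Finset.mem_univ, if_true]
        simp [Matrix.one_apply, hφ.eq_iff]
      have hZsub : ∀ (M : Matrix (Fin k) (Fin N) ℂ), M * Z.transpose = M.submatrix id φ := by
        intro M
        ext a b
        simp [Matrix.mul_apply, Matrix.transpose_apply, hZ, mul_ite, Finset.sum_ite_eq',
          Matrix.submatrix_apply]
      have hξc : ∑ ψ : Fin k → Fin N, ξ ψ * conj (ξ ψ) = ((c : ℝ) : ℂ) := by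
        have hcb := cauchyBinet Z Z (fun _ => 1)
        rw [Matrix.diagonal_one, Matrix.mul_one, hZZ, Matrix.det_one, mul_one] at hcb
        simp only [Finset.prod_const_one, one_mul] at hcb
        rw [hcast, hcb]
        exact Finset.sum_congr rfl fun ψ _ => by rw [hξreal ψ]
      have hpα : ∀ i, ∑ ψ : Fin k → Fin N, α i ψ * conj (ξ ψ) = ((c : ℝ) : ℂ) * α i φ := by
        intro i
        have hcb := cauchyBinet (P i) Z (fun _ => 1)
        rw [Matrix.diagonal_one, Matrix.mul_one, hZsub (P i)] at hcb
        simp only [Finset.prod_const_one, one_mul] at hcb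
        calc ∑ ψ : Fin k → Fin N, α i ψ * conj (ξ ψ)
            = ∑ ψ : Fin k → Fin N, α i ψ * ξ ψ :=
              Finset.sum_congr rfl fun ψ _ => by rw [hξreal ψ]
          _ = ((c : ℝ) : ℂ) * α i φ := by rw [hcast]; exact hcb.symm
      have hpβ : ∀ i, ∑ ψ : Fin k → Fin N, β i ψ * conj (ξ ψ) = ((c : ℝ) : ℂ) * β i φ := by
        intro i
        have hcb := cauchyBinet (Q i) Z (fun _ => 1)
        rw [Matrix.diagonal_one, Matrix.mul_one, hZsub (Q i)] at hcb
        simp only [Finset.prod_const_one, one_mul] at hcb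
        calc ∑ ψ : Fin k → Fin N, β i ψ * conj (ξ ψ)
            = ∑ ψ : Fin k → Fin N, β i ψ * ξ ψ :=
              Finset.sum_congr rfl fun ψ _ => by rw [hξreal ψ]
          _ = ((c : ℝ) : ℂ) * β i φ := by rw [hcast]; exact hcb.symm
      have besselα : ∑ i, ‖α i φ‖ ^ 2 ≤ 1 :=
        bessel_bound hkfac α ξ φ hα hξc hpα
      have besselβ : ∑ i, ‖β i φ‖ ^ 2 ≤ 1 := by
        have h := bessel_bound hkfac (fun i ψ => conj (β i ψ)) ξ φ
          (fun i j => by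
            simp only [Complex.conj_conj]
            exact hβo i j)
          hξc
          (fun i => by
            calc ∑ ψ : Fin k → Fin N, conj (β i ψ) * conj (ξ ψ)
                = conj (∑ ψ : Fin k → Fin N, β i ψ * conj (ξ ψ)) := by
                  rw [map_sum]
                  exact Finset.sum_congr rfl fun ψ _ => by
                    rw [map_mul, Complex.conj_conj, hξreal ψ, ← hξreal ψ]
              _ = ((c : ℝ) : ℂ) * conj (β i φ) := by
                  rw [hpβ i, map_mul, Complex.conj_ofReal])
        calc ∑ i, ‖β i φ‖ ^ 2 = ∑ i, ‖conj (β i φ)‖ ^ 2 := by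
              exact Finset.sum_congr rfl fun i _ => by rw [RCLike.norm_conj]
          _ ≤ 1 := h
      calc ‖∑ i, α i φ * β i φ‖ ≤ ∑ i, ‖α i φ * β i φ‖ := norm_sum_le _ _
        _ = ∑ i, ‖α i φ‖ * ‖β i φ‖ := Finset.sum_congr rfl fun i _ => norm_mul _ _
        _ ≤ Real.sqrt (∑ i, ‖α i φ‖ ^ 2) * Real.sqrt (∑ i, ‖β i φ‖ ^ 2) :=
            Real.sum_mul_le_sqrt_mul_sqrt _ _ _
        _ ≤ 1 * 1 := by
            have h1 : Real.sqrt (∑ i, ‖α i φ‖ ^ 2) ≤ 1 := by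
              rw [show (1:ℝ) = Real.sqrt 1 from (Real.sqrt_one).symm]
              exact Real.sqrt_le_sqrt besselα
            have h2 : Real.sqrt (∑ i, ‖β i φ‖ ^ 2) ≤ 1 := by
              rw [show (1:ℝ) = Real.sqrt 1 from (Real.sqrt_one).symm]
              exact Real.sqrt_le_sqrt besselβ
            exact mul_le_mul h1 h2 (Real.sqrt_nonneg _) (by norm_num)
        _ = 1 := by norm_num
    · have h0 : ∀ i, α i φ * β i φ = 0 := fun i => by
        rw [hαdef]; simp [hvanish _ _ hφ]
      rw [Finset.sum_congr rfl fun i _ => h0 i]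
      simp
  -- main assembly
  have hmain : ((k.factorial : ℕ) : ℂ)
        * ∑ i, (P i * Matrix.diagonal d * (Q i).transpose).det
      = ∑ φ : Fin k → Fin N, (∏ a, d (φ a)) * ∑ i, α i φ * β i φ := by
    rw [Finset.mul_sum]
    calc ∑ i, ((k.factorial : ℕ) : ℂ) * (P i * Matrix.diagonal d * (Q i).transpose).det
        = ∑ i, ∑ φ : Fin k → Fin N, (∏ a, d (φ a)) * (α i φ * β i φ) := by
          exact Finset.sum_congr rfl fun i _ => cauchyBinet (P i) (Q i) d
      _ = ∑ φ : Fin k → Fin N, ∑ i, (∏ a, d (φ a)) * (α i φ * β i φ) := Finset.sum_comm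
      _ = ∑ φ : Fin k → Fin N, (∏ a, d (φ a)) * ∑ i, α i φ * β i φ := by
          exact Finset.sum_congr rfl fun φ _ => by rw [Finset.mul_sum]
  have hprod : ∀ φ : Fin k → Fin N, ‖∏ a, d (φ a)‖ = ∏ a, s (φ a) := by
    intro φ
    rw [norm_prod]
    exact Finset.prod_congr rfl fun a _ => by
      simp only [hd, Complex.norm_real]
      exact Real.norm_of_nonneg (hs (φ a))
  have hsum_prod : ∑ φ : Fin k → Fin N, ∏ a, s (φ a) = (∑ j, s j) ^ k := by
    have h := Finset.prod_univ_sum (fun _ : Fin k => (Finset.univ : Finset (Fin N)))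
      (fun _ j => s j)
    rw [Fintype.piFinset_univ] at h
    rw [← h, Finset.prod_const, Finset.card_univ, Fintype.card_fin]
  have hnorm : (k.factorial : ℝ)
        * ‖∑ i, (P i * Matrix.diagonal d * (Q i).transpose).det‖ ≤ (∑ j, s j) ^ k := by
    have h1 : (k.factorial : ℝ) * ‖∑ i, (P i * Matrix.diagonal d * (Q i).transpose).det‖
        = ‖((k.factorial : ℕ) : ℂ) * ∑ i, (P i * Matrix.diagonal d * (Q i).transpose).det‖ := by
      rw [norm_mul]
      congr 1
      simp
    rw [h1, hmain]
    calc ‖∑ φ : Fin k → Fin N, (∏ a, d (φ a)) * ∑ i, α i φ * β i φ‖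
        ≤ ∑ φ : Fin k → Fin N, ‖(∏ a, d (φ a)) * ∑ i, α i φ * β i φ‖ := norm_sum_le _ _
      _ = ∑ φ : Fin k → Fin N, ‖∏ a, d (φ a)‖ * ‖∑ i, α i φ * β i φ‖ :=
          Finset.sum_congr rfl fun φ _ => norm_mul _ _
      _ ≤ ∑ φ : Fin k → Fin N, (∏ a, s (φ a)) * 1 := by
          refine Finset.sum_le_sum fun φ _ => ?_
          rw [hprod φ]
          exact mul_le_mul_of_nonneg_left (hperφ φ)
            (Finset.prod_nonneg fun a _ => hs (φ a))
      _ = (∑ j, s j) ^ k := by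
          simp only [mul_one]
          exact hsum_prod
  rw [le_div_iff₀ hkfac]
  linarith [hnorm]





lemma exists_svd (A : H →L[ℂ] H) (hA : IsTraceClass A) {ι : Type*} [Fintype ι] (g : ι → H) :
    ∃ (N : ℕ) (u v : Fin N → H) (s : Fin N → ℝ),
      (∀ j, 0 ≤ s j) ∧ (∑ j, s j) ≤ traceNorm A ∧
      (∀ p q : ι, (inner ℂ (g p) (g q) : ℂ) = ∑ j, (inner ℂ (g p) (u j) : ℂ) * (inner ℂ (u j) (g q) : ℂ)) ∧
      (∀ p q : ι, (inner ℂ (g p) (g q) : ℂ) = ∑ j, (inner ℂ (g p) (v j) : ℂ) * (inner ℂ (v j) (g q) : ℂ)) ∧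
      (∀ p q : ι, (inner ℂ (A (g p)) (g q) : ℂ)
        = ∑ j, ((s j : ℝ) : ℂ) * (inner ℂ (g p) (u j) : ℂ) * (inner ℂ (v j) (g q) : ℂ)) := by
  classical
  set E : Submodule ℂ H := Submodule.span ℂ (Set.range g) with hE
  haveI : FiniteDimensional ℂ E := FiniteDimensional.span_of_finite ℂ (Set.finite_range g)
  set N : ℕ := Module.finrank ℂ E with hN
  -- the compression of A to E
  set B : E →ₗ[ℂ] E :=
    ((Submodule.orthogonalProjection E).toLinearMap.comp A.toLinearMap).comp E.subtype with hB
  have hBinner : ∀ (x y : E), (inner ℂ (B x) y : ℂ) = (inner ℂ (A (x : H)) (y : H) : ℂ) := by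
    intro x y
    have := Submodule.inner_orthogonalProjection_eq_of_mem_right (K := E) y (A (x : H))
    exact this
  -- spectral theory for B† B
  set T : E →ₗ[ℂ] E := (LinearMap.adjoint B) * B with hT'
  have hT : T.IsSymmetric := LinearMap.isSymmetric_adjoint_mul_self B
  set u0 : OrthonormalBasis (Fin N) ℂ E := hT.eigenvectorBasis rfl with hu0
  set μ : Fin N → ℝ := hT.eigenvalues rfl with hμ
  have happly : ∀ j, T (u0 j) = (μ j : ℂ) • u0 j := fun j => hT.apply_eigenvectorBasis rfl j
  have hBu : ∀ i j, (inner ℂ (B (u0 i)) (B (u0 j)) : ℂ) = if i = j then ((μ j : ℝ) : ℂ) else 0 := by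
    intro i j
    have h1 : (inner ℂ (B (u0 i)) (B (u0 j)) : ℂ) = inner ℂ (u0 i) (T (u0 j)) := by
      rw [hT']
      rw [show ((LinearMap.adjoint B) * B) (u0 j) = (LinearMap.adjoint B) (B (u0 j)) from rfl]
      rw [LinearMap.adjoint_inner_right]
    rw [h1, happly j, inner_smul_right]
    rcases eq_or_ne i j with h | h
    · subst h; simp [orthonormal_iff_ite.mp u0.orthonormal]
    · simp [orthonormal_iff_ite.mp u0.orthonormal, h]
  have hμ0 : ∀ j, 0 ≤ μ j := by
    intro j
    have := hBu j j
    simp only [if_true] at this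
    have h2 : ((μ j : ℝ) : ℂ) = inner ℂ (B (u0 j)) (B (u0 j)) := this.symm
    have h3 := inner_self_nonneg (𝕜 := ℂ) (x := B (u0 j))
    rw [← h2] at h3
    simpa using h3
  set s : Fin N → ℝ := fun j => Real.sqrt (μ j) with hs'
  have hs0 : ∀ j, 0 ≤ s j := fun j => Real.sqrt_nonneg _
  have hs2 : ∀ j, s j * s j = μ j := fun j => Real.mul_self_sqrt (hμ0 j)
  -- the partial isometry vectors
  set S : Set (Fin N) := {j | B (u0 j) ≠ 0} with hS
  have hμpos : ∀ j ∈ S, s j ≠ 0 := by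
    intro j hj
    intro h0
    have : μ j = 0 := by rw [← hs2 j, h0, mul_zero]
    have h4 := hBu j j
    simp only [if_true, this] at h4
    exact hj ((inner_self_eq_zero (𝕜 := ℂ)).mp (by simpa using h4))
  set w : Fin N → E := fun j => (((s j : ℝ) : ℂ))⁻¹ • B (u0 j) with hw
  have hwon : Orthonormal ℂ (S.restrict w) := by
    rw [orthonormal_iff_ite]
    intro ⟨i, hi⟩ ⟨j, hj⟩
    simp only [Set.restrict_apply, Set.restrict, hw, inner_smul_left, inner_smul_right, map_inv₀,
      Complex.conj_ofReal, hBu i j]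
    rcases eq_or_ne i j with h | h
    · subst h
      simp only [if_true, Subtype.mk.injEq]
      rw [show (((s i : ℝ) : ℂ))⁻¹ * ((((s i : ℝ) : ℂ))⁻¹ * ((μ i : ℝ) : ℂ))
          = (((s i : ℝ) : ℂ) * ((s i : ℝ) : ℂ))⁻¹ * ((μ i : ℝ) : ℂ) by ring]
      rw [show ((s i : ℝ) : ℂ) * ((s i : ℝ) : ℂ) = ((μ i : ℝ) : ℂ) by
        rw [← Complex.ofReal_mul, hs2 i]]
      refine inv_mul_cancel₀ ?_
      simp only [ne_eq, Complex.ofReal_eq_zero]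
      intro h0
      exact hμpos i hi (by rw [← hs2 i] at h0; exact (mul_self_eq_zero.mp h0))
    · have : ¬ ((⟨i, hi⟩ : S) = ⟨j, hj⟩) := by simpa [Subtype.mk.injEq] using h
      simp [h, this]
  obtain ⟨v0, hv0⟩ := hwon.exists_orthonormalBasis_extension_of_card_eq
    (by simp [hN]) 
  have hBv : ∀ j, B (u0 j) = ((s j : ℝ) : ℂ) • v0 j := by
    intro j
    by_cases hj : j ∈ S
    · rw [hv0 j hj, hw]
      simp only []
      rw [smul_smul]
      rw [mul_inv_cancel₀ (by simpa [ne_eq, Complex.ofReal_eq_zero] using hμpos j hj), one_smul]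
    · have h1 : B (u0 j) = 0 := by simpa [hS, Set.mem_setOf_eq, not_not] using hj
      have h2 : μ j = 0 := by
        have h4 := hBu j j
        simp only [if_true, h1, inner_zero_left] at h4
        exact_mod_cast h4.symm
      have h5 : s j = 0 := by rw [hs']; simp [h2]
      rw [h1, h5, Complex.ofReal_zero, zero_smul]
  -- the singular value sum is bounded by the trace norm
  refine ⟨N, fun j => (u0 j : H), fun j => (v0 j : H), s, hs0, ?_, ?_, ?_, ?_⟩
  · -- trace norm bound
    have huon : Orthonormal ℂ (fun j => ((u0 j : H))) := by
      rw [orthonormal_iff_ite]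
      intro i j
      rw [← Submodule.coe_inner, orthonormal_iff_ite.mp u0.orthonormal]
    have hvon : Orthonormal ℂ (fun j => ((v0 j : H))) := by
      rw [orthonormal_iff_ite]
      intro i j
      rw [← Submodule.coe_inner, orthonormal_iff_ite.mp v0.orthonormal]
    have hsum : (∑ j, (inner ℂ (A ((u0 j : H))) ((v0 j : H)) : ℂ)) = ((∑ j, s j : ℝ) : ℂ) := by
      push_cast
      refine Finset.sum_congr rfl fun j _ => ?_
      rw [← hBinner (u0 j) (v0 j), hBv j, inner_smul_left, Complex.conj_ofReal]
      rw [orthonormal_iff_ite.mp v0.orthonormal]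
      simp
    have hmem : ‖∑ j, (inner ℂ (A ((u0 j : H))) ((v0 j : H)) : ℂ)‖ ∈ traceNormSet A :=
      ⟨N, _, _, huon, hvon, rfl⟩
    have hle := le_csSup hA hmem
    rw [hsum] at hle
    rw [Complex.norm_real, Real.norm_of_nonneg (Finset.sum_nonneg fun j _ => hs0 j)] at hle
    exact hle
  · intro p q
    have hgp : g p ∈ E := Submodule.subset_span (Set.mem_range_self p)
    have hgq : g q ∈ E := Submodule.subset_span (Set.mem_range_self q)
    have key := u0.sum_inner_mul_inner ⟨g p, hgp⟩ ⟨g q, hgq⟩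
    calc (inner ℂ (g p) (g q) : ℂ)
        = (inner ℂ (⟨g p, hgp⟩ : E) (⟨g q, hgq⟩ : E) : ℂ) := by rw [Submodule.coe_inner]
      _ = ∑ j, (inner ℂ (⟨g p, hgp⟩ : E) (u0 j) : ℂ) * (inner ℂ (u0 j) (⟨g q, hgq⟩ : E) : ℂ) :=
          key.symm
      _ = ∑ j, (inner ℂ (g p) ((u0 j : H)) : ℂ) * (inner ℂ ((u0 j : H)) (g q) : ℂ) := by
          refine Finset.sum_congr rfl fun j _ => ?_
          rw [Submodule.coe_inner, Submodule.coe_inner]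
  · intro p q
    have hgp : g p ∈ E := Submodule.subset_span (Set.mem_range_self p)
    have hgq : g q ∈ E := Submodule.subset_span (Set.mem_range_self q)
    have key := v0.sum_inner_mul_inner ⟨g p, hgp⟩ ⟨g q, hgq⟩
    calc (inner ℂ (g p) (g q) : ℂ)
        = (inner ℂ (⟨g p, hgp⟩ : E) (⟨g q, hgq⟩ : E) : ℂ) := by rw [Submodule.coe_inner]
      _ = ∑ j, (inner ℂ (⟨g p, hgp⟩ : E) (v0 j) : ℂ) * (inner ℂ (v0 j) (⟨g q, hgq⟩ : E) : ℂ) :=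
          key.symm
      _ = ∑ j, (inner ℂ (g p) ((v0 j : H)) : ℂ) * (inner ℂ ((v0 j : H)) (g q) : ℂ) := by
          refine Finset.sum_congr rfl fun j _ => ?_
          rw [Submodule.coe_inner, Submodule.coe_inner]
  · intro p q
    have hgp : g p ∈ E := Submodule.subset_span (Set.mem_range_self p)
    have hgq : g q ∈ E := Submodule.subset_span (Set.mem_range_self q)
    have h1 : (inner ℂ (A (g p)) (g q) : ℂ)
        = (inner ℂ (B ⟨g p, hgp⟩) (⟨g q, hgq⟩ : E) : ℂ) := by
      have h0 := hBinner ⟨g p, hgp⟩ ⟨g q, hgq⟩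
      simpa using h0.symm
    have h2 : B ⟨g p, hgp⟩
        = ∑ j, (inner ℂ (u0 j) (⟨g p, hgp⟩ : E) : ℂ) • (((s j : ℝ) : ℂ) • v0 j) := by
      conv_lhs => rw [← u0.sum_repr' ⟨g p, hgp⟩]
      rw [map_sum]
      exact Finset.sum_congr rfl fun j _ => by rw [LinearMap.map_smul, hBv j]
    rw [h1, h2, sum_inner]
    refine Finset.sum_congr rfl fun j _ => ?_
    rw [inner_smul_left, inner_smul_left, Complex.conj_ofReal, inner_conj_symm]
    have c1 : (inner ℂ (⟨g p, hgp⟩ : E) (u0 j) : ℂ) = (inner ℂ (g p) ((u0 j : H)) : ℂ) := by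
      rw [Submodule.coe_inner]
    have c2 : (inner ℂ (v0 j) (⟨g q, hgq⟩ : E) : ℂ) = (inner ℂ ((v0 j : H)) (g q) : ℂ) := by
      rw [Submodule.coe_inner]
    rw [c1, c2]
    ring



end ExtPowAux

/-- For a trace class operator `A` on a separable Hilbert space and every `k ≥ 0`,
`‖Λᵏ(A)‖₁ ≤ ‖A‖₁ᵏ / k!`. -/
theorem extPowerTraceNorm_le (A : H →L[ℂ] H) (hA : IsTraceClass A) (k : ℕ) :
    extPowerTraceNorm k A ≤ traceNorm A ^ k / (Nat.factorial k) := by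
  classical
  have h0mem : (0 : ℝ) ∈ traceNormSet A := by
    refine ⟨0, (fun i => i.elim0), (fun i => i.elim0), ?_, ?_, by simp⟩ <;>
      · rw [orthonormal_iff_ite]; intro i; exact i.elim0
  have htn0 : 0 ≤ traceNorm A := le_csSup hA h0mem
  have hkfac : (0 : ℝ) < (Nat.factorial k : ℝ) := by positivity
  apply Real.sSup_le
  · rintro x ⟨n, e, f, he, hf, rfl⟩
    set g : (Fin n × Fin k) ⊕ (Fin n × Fin k) → H :=
      Sum.elim (fun p => e p.1 p.2) (fun p => f p.1 p.2) with hg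
    obtain ⟨N, u, v, s, hs0, hsle, hu, hv, hm⟩ := ExtPowAux.exists_svd A hA g
    set P : Fin n → Matrix (Fin k) (Fin N) ℂ :=
      fun i => Matrix.of fun a j => (inner ℂ (e i a) (u j) : ℂ) with hPdef
    set Q : Fin n → Matrix (Fin k) (Fin N) ℂ :=
      fun i => Matrix.of fun b j => (inner ℂ (v j) (f i b) : ℂ) with hQdef
    have hPP : ∀ i j, (P i * (P j).conjTranspose).det = if i = j then 1 else 0 := by
      intro i j
      have hmat : P i * (P j).conjTranspose
          = Matrix.of fun a b : Fin k => (inner ℂ (e i a) (e j b) : ℂ) := by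
        ext a b
        rw [Matrix.mul_apply, Matrix.of_apply,
          show (inner ℂ (e i a) (e j b) : ℂ) = _ from hu (Sum.inl (i, a)) (Sum.inl (j, b))]
        refine Finset.sum_congr rfl fun l _ => ?_
        rw [Matrix.conjTranspose_apply]
        simp only [hPdef, Matrix.of_apply, RCLike.star_def]
        rw [inner_conj_symm]
        simp [hg]
      rw [hmat]
      exact he i j
    have hQQ : ∀ i j, ((Q i).map (starRingEnd ℂ) * (Q j).transpose).det
        = if i = j then 1 else 0 := by
      intro i j
      have hmat : (Q i).map (starRingEnd ℂ) * (Q j).transpose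
          = Matrix.of fun a b : Fin k => (inner ℂ (f i a) (f j b) : ℂ) := by
        ext a b
        rw [Matrix.mul_apply, Matrix.of_apply,
          show (inner ℂ (f i a) (f j b) : ℂ) = _ from hv (Sum.inr (i, a)) (Sum.inr (j, b))]
        refine Finset.sum_congr rfl fun l _ => ?_
        rw [Matrix.map_apply, Matrix.transpose_apply]
        simp only [hQdef, Matrix.of_apply]
        rw [inner_conj_symm]
        simp [hg]
      rw [hmat]
      exact hf i j
    have hMM : ∀ i, Matrix.of (fun a b : Fin k => (inner ℂ (A (e i a)) (f i b) : ℂ))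
        = P i * Matrix.diagonal (fun j => ((s j : ℝ) : ℂ)) * (Q i).transpose := by
      intro i
      ext a b
      rw [Matrix.of_apply,
        show (inner ℂ (A (e i a)) (f i b) : ℂ) = _ from hm (Sum.inl (i, a)) (Sum.inr (i, b)),
        Matrix.mul_apply]
      refine Finset.sum_congr rfl fun l _ => ?_
      rw [Matrix.mul_diagonal, Matrix.transpose_apply]
      simp only [hPdef, hQdef, Matrix.of_apply, hg, Sum.elim_inl, Sum.elim_inr]
      ring
    have hbound := ExtPowAux.matrix_bound P Q s hs0 hPP hQQ
    calc ‖∑ i, Matrix.det (Matrix.of fun a b : Fin k => (inner ℂ (A (e i a)) (f i b) : ℂ))‖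
        = ‖∑ i, (P i * Matrix.diagonal (fun j => ((s j : ℝ) : ℂ)) * (Q i).transpose).det‖ := by
          congr 1
          exact Finset.sum_congr rfl fun i _ => by rw [hMM i]
      _ ≤ (∑ j, s j) ^ k / (Nat.factorial k : ℝ) := hbound
      _ ≤ traceNorm A ^ k / (Nat.factorial k : ℝ) := by
          have hp : (∑ j, s j) ^ k ≤ traceNorm A ^ k :=
            pow_le_pow_left₀ (Finset.sum_nonneg fun j _ => hs0 j) hsle k
          exact (div_le_div_iff_of_pos_right hkfac).mpr hp
  · positivity

end
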